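/- For μ₀ ∈ ℝ \ {0}, ν₀ > 0, λ₀ ∈ ℝ with λ₀² + ν₀² = 1/2, and x such that 1 - (2√2 ν₀/μ₀)e^{2ν₀x} ≠ 0, the pair Ψ₁₁(x,y) = ν₀ e^{ν₀(x-y)} / (1 - (2√2ν₀/μ₀)e^{2ν₀x}) and Ψ₁₂(x,y) = √2 ν₀(λ₀ - iν₀) e^{ν₀(x-y)} / (1 - (2√2ν₀/μ₀)e^{2ν₀x}) solves, for y ≥ x, the finite-rank Marchenko system: 2√2 Ψ₁₁(x,y) = -F₂(x+y) + ∫_x^∞ [Ψ₁₂(x,s)·√2(F₁(s+y) - iF₂'(s+y)) + Ψ₁₁(x,s)·F₂(s+y)] ds and 2√2 Ψ₁₂(x,y) = -√2(F₁(x+y) + iF₂'(x+y)) + ∫_x^∞ [Ψ₁₁(x,s)·√2(F₁(s+y) + iF₂'(s+y)) + Ψ₁₂(x,s)·F₂(s+y)] ds, where F₁(z) = μ₀λ₀ e^{-ν₀z} and F₂(z) = μ₀ e^{-ν₀z}. -/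

import Mathlib

open MeasureTheory

lemma aux_exp_integral (a c : ℝ) (ha : 0 < a) :
    ∫ s in Set.Ioi c, Real.exp (-a * s) = Real.exp (-a * c) / a := by
  have hderiv : ∀ s ∈ Set.Ici c,
      HasDerivAt (fun t => -Real.exp (-a * t) / a) (Real.exp (-a * s)) s := by
    intro s _
    have h := (((hasDerivAt_id s).const_mul (-a)).exp.neg.div_const a)
    refine h.congr_deriv ?_
    field_simp
    rfl
  have htend : Filter.Tendsto (fun t => -Real.exp (-a * t) / a)
      Filter.atTop (nhds 0) := by
    have : Filter.Tendsto (fun t => -Real.exp (-a * t) / a) Filter.atTop (nhds (-0 / a)) := by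
      refine Filter.Tendsto.div_const (Filter.Tendsto.neg ?_) _
      exact Real.tendsto_exp_atBot.comp (Filter.tendsto_id.const_mul_atTop_of_neg (by linarith))
    simpa using this
  have := integral_Ioi_of_hasDerivAt_of_tendsto' hderiv (exp_neg_integrableOn_Ioi c ha) htend
  rw [this]; field_simp; ring

lemma alg1 (a n m E3 E5 E6 E7 d : ℂ) (hm : m ≠ 0) (hn : n ≠ 0)
    (hd : d ≠ 0) (hdm : m * d = m - 2 * a * n * E7) (h1 : E7 * E5 = E3) (h2 : E3 * E6 = E5) :
    2 * a * (n * E3 / d)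
      = -(m * E5) + 2 * n * m * E3 / d * (E6 / (2 * n)) := by
  field_simp
  linear_combination E5 * hdm + (-2*a*n) * h1 + (-m) * h2

lemma alg2 (a n m l E3 E5 E6 E7 d : ℂ) (hm : m ≠ 0) (hn : n ≠ 0)
    (hd : d ≠ 0) (hdm : m * d = m - 2 * a * n * E7) (h1 : E7 * E5 = E3) (h2 : E3 * E6 = E5) :
    2 * a * (a * n * (l - Complex.I * n) * E3 / d)
      = -(a * (m * l * E5 + Complex.I * (-(n * m * E5))))
        + 2 * a * n * m * (l - Complex.I * n) * E3 / d * (E6 / (2 * n)) := by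
  field_simp
  linear_combination (a*(l - Complex.I*n)*E5) * hdm
    + (-2*a^2*n*(l - Complex.I*n)) * h1 + (-a*m*(l - Complex.I*n)) * h2

theorem finite_rank_marchenko (μ₀ ν₀ lam₀ x : ℝ) (hμ : μ₀ ≠ 0) (hν : 0 < ν₀)
    (hrel : lam₀ ^ 2 + ν₀ ^ 2 = 1 / 2)
    (hden : ∀ s : ℝ, x ≤ s → 1 - 2 * Real.sqrt 2 * ν₀ / μ₀ * Real.exp (2 * ν₀ * s) ≠ 0)
    (F₁ F₂ : ℝ → ℝ)
    (hF₁ : ∀ z : ℝ, F₁ z = μ₀ * lam₀ * Real.exp (-ν₀ * z))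
    (hF₂ : ∀ z : ℝ, F₂ z = μ₀ * Real.exp (-ν₀ * z))
    (Ψ₁₁ Ψ₁₂ : ℝ → ℝ → ℂ)
    (hΨ₁₁ : ∀ x' y : ℝ, Ψ₁₁ x' y =
      ((ν₀ * Real.exp (ν₀ * (x' - y))
        / (1 - 2 * Real.sqrt 2 * ν₀ / μ₀ * Real.exp (2 * ν₀ * x')) : ℝ) : ℂ))
    (hΨ₁₂ : ∀ x' y : ℝ, Ψ₁₂ x' y =
      (Real.sqrt 2 : ℂ) * (ν₀ : ℂ) * ((lam₀ : ℂ) - Complex.I * (ν₀ : ℂ))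
        * (Real.exp (ν₀ * (x' - y)) : ℂ)
        / ((1 - 2 * Real.sqrt 2 * ν₀ / μ₀ * Real.exp (2 * ν₀ * x') : ℝ) : ℂ)) :
    ∀ y : ℝ, x ≤ y →
      (2 * (Real.sqrt 2 : ℂ) * Ψ₁₁ x y = -((F₂ (x + y) : ℝ) : ℂ)
        + ∫ s in Set.Ioi x,
            (Ψ₁₂ x s * ((Real.sqrt 2 : ℂ)
                * (((F₁ (s + y) : ℝ) : ℂ) - Complex.I * ((deriv F₂ (s + y) : ℝ) : ℂ)))
              + Ψ₁₁ x s * ((F₂ (s + y) : ℝ) : ℂ)))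
      ∧
      (2 * (Real.sqrt 2 : ℂ) * Ψ₁₂ x y
        = -((Real.sqrt 2 : ℂ)
            * (((F₁ (x + y) : ℝ) : ℂ) + Complex.I * ((deriv F₂ (x + y) : ℝ) : ℂ)))
        + ∫ s in Set.Ioi x,
            (Ψ₁₁ x s * ((Real.sqrt 2 : ℂ)
                * (((F₁ (s + y) : ℝ) : ℂ) + Complex.I * ((deriv F₂ (s + y) : ℝ) : ℂ)))
              + Ψ₁₂ x s * ((F₂ (s + y) : ℝ) : ℂ))) := by
  intro y hy
  -- derivative of F₂
  have hF₂fun : F₂ = fun z => μ₀ * Real.exp (-ν₀ * z) := funext hF₂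
  have hderivF₂ : ∀ z : ℝ, deriv F₂ z = -ν₀ * μ₀ * Real.exp (-ν₀ * z) := by
    intro z
    have h : HasDerivAt F₂ (-ν₀ * μ₀ * Real.exp (-ν₀ * z)) z := by
      rw [hF₂fun]
      have := (((hasDerivAt_id z).const_mul (-ν₀)).exp.const_mul μ₀)
      refine this.congr_deriv ?_
      simp [id]; ring
    exact h.deriv
  have hD := hden x le_rfl
  have hDC : ((1 - 2 * Real.sqrt 2 * ν₀ / μ₀ * Real.exp (2 * ν₀ * x) : ℝ) : ℂ) ≠ 0 := by
    exact_mod_cast hD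
  have hμC : (μ₀ : ℂ) ≠ 0 := by exact_mod_cast hμ
  have hνC : (ν₀ : ℂ) ≠ 0 := by exact_mod_cast hν.ne'
  have ha2 : (Real.sqrt 2 : ℂ) ^ 2 = 2 := by
    have : (Real.sqrt 2 : ℝ) ^ 2 = 2 := Real.sq_sqrt (by norm_num)
    exact_mod_cast this
  have hrelC : (lam₀ : ℂ) ^ 2 + (ν₀ : ℂ) ^ 2 = 1 / 2 := by
    have := congrArg (Complex.ofReal) hrel; push_cast at this; exact this
  have hexpval : (∫ s in Set.Ioi x, Real.exp (-(2 * ν₀) * s))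
      = Real.exp (-(2 * ν₀) * x) / (2 * ν₀) := aux_exp_integral (2 * ν₀) x (by linarith)
  -- pointwise identities
  have hpt1 : ∀ s ∈ Set.Ioi x,
      (Ψ₁₂ x s * ((Real.sqrt 2 : ℂ)
          * (((F₁ (s + y) : ℝ) : ℂ) - Complex.I * ((deriv F₂ (s + y) : ℝ) : ℂ)))
        + Ψ₁₁ x s * ((F₂ (s + y) : ℝ) : ℂ))
      = ((2 * ν₀ * μ₀ * Real.exp (ν₀ * (x - y))
          / (1 - 2 * Real.sqrt 2 * ν₀ / μ₀ * Real.exp (2 * ν₀ * x)) : ℝ) : ℂ)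
        * ((Real.exp (-(2 * ν₀) * s) : ℝ) : ℂ) := by
    intro s _
    rw [hΨ₁₁, hΨ₁₂, hF₁, hF₂, hderivF₂]
    have heC : (Real.exp (ν₀ * (x - s)) : ℂ) * (Real.exp (-ν₀ * (s + y)) : ℂ)
        = (Real.exp (ν₀ * (x - y)) : ℂ) * (Real.exp (-(2 * ν₀) * s) : ℂ) := by
      rw [← Complex.ofReal_mul, ← Complex.ofReal_mul, ← Real.exp_add, ← Real.exp_add]
      ring_nf
    push_cast [-Complex.ofReal_exp]
    linear_combination
      (((ν₀:ℂ) * μ₀ * (Real.exp (ν₀ * (x - s)) : ℂ) * (Real.exp (-ν₀ * (s + y)) : ℂ)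
          * ((lam₀:ℂ)^2 - Complex.I^2 * (ν₀:ℂ)^2))
        / (1 - 2 * (Real.sqrt 2:ℂ) * (ν₀:ℂ) / (μ₀:ℂ) * (Real.exp (2 * ν₀ * x) : ℂ))) * ha2
      + ((-2 * (ν₀:ℂ)^3 * (μ₀:ℂ) * (Real.exp (ν₀ * (x - s)) : ℂ) * (Real.exp (-ν₀ * (s + y)) : ℂ))
        / (1 - 2 * (Real.sqrt 2:ℂ) * (ν₀:ℂ) / (μ₀:ℂ) * (Real.exp (2 * ν₀ * x) : ℂ))) * Complex.I_sq
      + ((2 * (ν₀:ℂ) * (μ₀:ℂ) * (Real.exp (ν₀ * (x - s)) : ℂ) * (Real.exp (-ν₀ * (s + y)) : ℂ))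
        / (1 - 2 * (Real.sqrt 2:ℂ) * (ν₀:ℂ) / (μ₀:ℂ) * (Real.exp (2 * ν₀ * x) : ℂ))) * hrelC
      + ((2 * (ν₀:ℂ) * (μ₀:ℂ))
        / (1 - 2 * (Real.sqrt 2:ℂ) * (ν₀:ℂ) / (μ₀:ℂ) * (Real.exp (2 * ν₀ * x) : ℂ))) * heC
  have hpt2 : ∀ s ∈ Set.Ioi x,
      (Ψ₁₁ x s * ((Real.sqrt 2 : ℂ)
          * (((F₁ (s + y) : ℝ) : ℂ) + Complex.I * ((deriv F₂ (s + y) : ℝ) : ℂ)))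
        + Ψ₁₂ x s * ((F₂ (s + y) : ℝ) : ℂ))
      = (2 * (Real.sqrt 2 : ℂ) * (ν₀:ℂ) * (μ₀:ℂ) * ((lam₀:ℂ) - Complex.I * (ν₀:ℂ))
          * (Real.exp (ν₀ * (x - y)) : ℂ)
          / ((1 - 2 * Real.sqrt 2 * ν₀ / μ₀ * Real.exp (2 * ν₀ * x) : ℝ) : ℂ))
        * ((Real.exp (-(2 * ν₀) * s) : ℝ) : ℂ) := by
    intro s _
    rw [hΨ₁₁, hΨ₁₂, hF₁, hF₂, hderivF₂]
    have heC : (Real.exp (ν₀ * (x - s)) : ℂ) * (Real.exp (-ν₀ * (s + y)) : ℂ)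
        = (Real.exp (ν₀ * (x - y)) : ℂ) * (Real.exp (-(2 * ν₀) * s) : ℂ) := by
      rw [← Complex.ofReal_mul, ← Complex.ofReal_mul, ← Real.exp_add, ← Real.exp_add]
      ring_nf
    push_cast [-Complex.ofReal_exp]
    linear_combination
      ((2 * (Real.sqrt 2:ℂ) * (ν₀:ℂ) * (μ₀:ℂ) * ((lam₀:ℂ) - Complex.I * (ν₀:ℂ)))
        / (1 - 2 * (Real.sqrt 2:ℂ) * (ν₀:ℂ) / (μ₀:ℂ) * (Real.exp (2 * ν₀ * x) : ℂ))) * heC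
  -- compute the two integrals
  have hint1 : (∫ s in Set.Ioi x,
      (Ψ₁₂ x s * ((Real.sqrt 2 : ℂ)
          * (((F₁ (s + y) : ℝ) : ℂ) - Complex.I * ((deriv F₂ (s + y) : ℝ) : ℂ)))
        + Ψ₁₁ x s * ((F₂ (s + y) : ℝ) : ℂ)))
      = ((2 * ν₀ * μ₀ * Real.exp (ν₀ * (x - y))
          / (1 - 2 * Real.sqrt 2 * ν₀ / μ₀ * Real.exp (2 * ν₀ * x)) : ℝ) : ℂ)
        * ((Real.exp (-(2 * ν₀) * x) / (2 * ν₀) : ℝ) : ℂ) := by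
    have hcast : (∫ s in Set.Ioi x, ((Real.exp (-(2 * ν₀) * s) : ℝ) : ℂ))
        = ((Real.exp (-(2 * ν₀) * x) / (2 * ν₀) : ℝ) : ℂ) := by
      rw [← hexpval]; exact integral_ofReal
    rw [setIntegral_congr_fun measurableSet_Ioi hpt1, integral_const_mul, hcast]
  have hint2 : (∫ s in Set.Ioi x,
      (Ψ₁₁ x s * ((Real.sqrt 2 : ℂ)
          * (((F₁ (s + y) : ℝ) : ℂ) + Complex.I * ((deriv F₂ (s + y) : ℝ) : ℂ)))
        + Ψ₁₂ x s * ((F₂ (s + y) : ℝ) : ℂ)))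
      = (2 * (Real.sqrt 2 : ℂ) * (ν₀:ℂ) * (μ₀:ℂ) * ((lam₀:ℂ) - Complex.I * (ν₀:ℂ))
          * (Real.exp (ν₀ * (x - y)) : ℂ)
          / ((1 - 2 * Real.sqrt 2 * ν₀ / μ₀ * Real.exp (2 * ν₀ * x) : ℝ) : ℂ))
        * ((Real.exp (-(2 * ν₀) * x) / (2 * ν₀) : ℝ) : ℂ) := by
    have hcast : (∫ s in Set.Ioi x, ((Real.exp (-(2 * ν₀) * s) : ℝ) : ℂ))
        = ((Real.exp (-(2 * ν₀) * x) / (2 * ν₀) : ℝ) : ℂ) := by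
      rw [← hexpval]; exact integral_ofReal
    rw [setIntegral_congr_fun measurableSet_Ioi hpt2, integral_const_mul, hcast]
  -- final algebraic identities
  have hg1 : (Real.exp (2 * ν₀ * x) : ℂ) * (Real.exp (-ν₀ * (x + y)) : ℂ)
      = (Real.exp (ν₀ * (x - y)) : ℂ) := by
    rw [← Complex.ofReal_mul, ← Real.exp_add]; ring_nf
  have hg2 : (Real.exp (ν₀ * (x - y)) : ℂ) * (Real.exp (-(2 * ν₀) * x) : ℂ)
      = (Real.exp (-ν₀ * (x + y)) : ℂ) := by
    rw [← Complex.ofReal_mul, ← Real.exp_add]; ring_nf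
  have hd' : (1 : ℂ) - 2 * (Real.sqrt 2 : ℂ) * (ν₀:ℂ) / (μ₀:ℂ)
      * (Real.exp (2 * ν₀ * x) : ℂ) ≠ 0 := by
    push_cast [-Complex.ofReal_exp] at hDC
    exact hDC
  have hdm : (μ₀:ℂ) * ((1 : ℂ) - 2 * (Real.sqrt 2 : ℂ) * (ν₀:ℂ) / (μ₀:ℂ)
        * (Real.exp (2 * ν₀ * x) : ℂ))
      = (μ₀:ℂ) - 2 * (Real.sqrt 2 : ℂ) * (ν₀:ℂ) * (Real.exp (2 * ν₀ * x) : ℂ) := by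
    field_simp
  constructor
  · rw [hint1, hΨ₁₁, hF₂]
    push_cast [-Complex.ofReal_exp]
    linear_combination alg1 (Real.sqrt 2 : ℂ) (ν₀:ℂ) (μ₀:ℂ)
      (Real.exp (ν₀ * (x - y)) : ℂ) (Real.exp (-ν₀ * (x + y)) : ℂ)
      (Real.exp (-(2 * ν₀) * x) : ℂ) (Real.exp (2 * ν₀ * x) : ℂ) _
      hμC hνC hd' hdm hg1 hg2
  · rw [hint2, hΨ₁₂, hF₁, hderivF₂]
    push_cast [-Complex.ofReal_exp]
    linear_combination alg2 (Real.sqrt 2 : ℂ) (ν₀:ℂ) (μ₀:ℂ) (lam₀:ℂ)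
      (Real.exp (ν₀ * (x - y)) : ℂ) (Real.exp (-ν₀ * (x + y)) : ℂ)
      (Real.exp (-(2 * ν₀) * x) : ℂ) (Real.exp (2 * ν₀ * x) : ℂ) _
      hμC hνC hd' hdm hg1 hg2
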